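/- Let p be a monic real polynomial of degree d with d distinct roots, exactly r of which are real (so c = (d−r)/2 conjugate pairs). For 0 ≤ e ≤ d, the number of monic real polynomials g of degree e dividing p equals the coefficient of x^{d−e} y^{e} in (x+y)^r (x²+y²)^c. -/

import Mathlib

open Polynomial

/-- The coefficient of x^{d−e} y^{e} in (x+y)^r (x²+y²)^{(d−r)/2}. -/
noncomputable def nuCoeff (d e r : ℕ) : ℕ :=
  MvPolynomial.coeff (Finsupp.single 0 (d - e) + Finsupp.single 1 e)
    (((MvPolynomial.X 0 + MvPolynomial.X 1) ^ r *
      (MvPolynomial.X 0 ^ 2 + MvPolynomial.X 1 ^ 2) ^ ((d - r) / 2) :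
        MvPolynomial (Fin 2) ℕ))


open Finset UniqueFactorizationMonoid

def countN (r c e : ℕ) : ℕ :=
  ∑ ab ∈ ((range (r+1)) ×ˢ (range (c+1))).filter (fun ab => ab.1 + 2 * ab.2 = e),
    r.choose ab.1 * c.choose ab.2

lemma finsupp_pair_eq (m n m' n' : ℕ) :
    (Finsupp.single (0 : Fin 2) m + Finsupp.single 1 n
      = Finsupp.single (0 : Fin 2) m' + Finsupp.single 1 n') ↔ (m = m' ∧ n = n') := by
  constructor
  · intro h
    have h0 := DFunLike.congr_fun h 0
    have h1 := DFunLike.congr_fun h 1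
    simp [Finsupp.single_apply] at h0 h1
    exact ⟨h0, h1⟩
  · rintro ⟨rfl, rfl⟩; rfl

lemma expand_pow1 (r : ℕ) :
    (MvPolynomial.X 0 + MvPolynomial.X 1 : MvPolynomial (Fin 2) ℕ) ^ r =
    ∑ a ∈ range (r+1),
      MvPolynomial.monomial (Finsupp.single 0 a + Finsupp.single 1 (r-a)) (r.choose a) := by
  rw [add_pow]
  refine Finset.sum_congr rfl fun a ha => ?_
  rw [MvPolynomial.X_pow_eq_monomial, MvPolynomial.X_pow_eq_monomial,
    MvPolynomial.monomial_mul]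
  rw [show ((r.choose a : ℕ) : MvPolynomial (Fin 2) ℕ) = MvPolynomial.C (r.choose a) by simp]
  rw [MvPolynomial.C_apply, MvPolynomial.monomial_mul]
  simp

lemma expand_pow2 (c : ℕ) :
    (MvPolynomial.X 0 ^ 2 + MvPolynomial.X 1 ^ 2 : MvPolynomial (Fin 2) ℕ) ^ c =
    ∑ b ∈ range (c+1),
      MvPolynomial.monomial (Finsupp.single 0 (2*b) + Finsupp.single 1 (2*(c-b)))
        (c.choose b) := by
  rw [add_pow]
  refine Finset.sum_congr rfl fun b hb => ?_
  rw [← pow_mul, ← pow_mul, Nat.mul_comm 2 b, Nat.mul_comm 2 (c-b)]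
  rw [MvPolynomial.X_pow_eq_monomial, MvPolynomial.X_pow_eq_monomial,
    MvPolynomial.monomial_mul]
  rw [show ((c.choose b : ℕ) : MvPolynomial (Fin 2) ℕ) = MvPolynomial.C (c.choose b) by simp]
  rw [MvPolynomial.C_apply, MvPolynomial.monomial_mul]
  simp [Nat.mul_comm]

lemma countN_eq_double_sum (r c e : ℕ) :
    countN r c e = ∑ a ∈ range (r+1), ∑ b ∈ range (c+1),
      if a + 2*b = e then r.choose a * c.choose b else 0 := by
  rw [countN, Finset.sum_filter, Finset.sum_product]

lemma nuCoeff_eq (r c e : ℕ) (he : e ≤ r + 2*c) :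
    nuCoeff (r + 2*c) e r = countN r c e := by
  rw [nuCoeff, show (r+2*c-r)/2 = c by omega, expand_pow1, expand_pow2, Finset.sum_mul_sum]
  simp_rw [MvPolynomial.monomial_mul, MvPolynomial.coeff_sum, MvPolynomial.coeff_monomial]
  rw [countN_eq_double_sum]
  rw [← Finset.sum_range_reflect (fun a => ∑ b ∈ range (c+1),
      if a + 2*b = e then r.choose a * c.choose b else 0) (r+1)]
  refine Finset.sum_congr rfl fun a ha => ?_
  rw [← Finset.sum_range_reflect (fun b =>
      if (r + 1 - 1 - a) + 2*b = e then r.choose (r + 1 - 1 - a) * c.choose b else 0) (c+1)]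
  refine Finset.sum_congr rfl fun b hb => ?_
  rw [Finset.mem_range] at ha hb
  have ha' : a ≤ r := Nat.lt_succ_iff.mp ha
  have hb' : b ≤ c := Nat.lt_succ_iff.mp hb
  have key : ((Finsupp.single (0:Fin 2) a + Finsupp.single 1 (r-a)) +
      (Finsupp.single (0:Fin 2) (2*b) + Finsupp.single 1 (2*(c-b)))
      = Finsupp.single (0:Fin 2) (r + 2*c - e) + Finsupp.single 1 e)
      ↔ ((r + 1 - 1 - a) + 2*(c + 1 - 1 - b) = e) := by
    rw [add_add_add_comm, ← Finsupp.single_add, ← Finsupp.single_add, finsupp_pair_eq]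
    omega
  rw [if_congr key rfl rfl]
  congr 1
  have h1 : r + 1 - 1 - a = r - a := by omega
  have h2 : c + 1 - 1 - b = c - b := by omega
  rw [h1, h2, Nat.choose_symm ha', Nat.choose_symm hb']

lemma count_subsets {α : Type*} [DecidableEq α] (F₁ F₂ : Finset α) (hdisj : Disjoint F₁ F₂)
    (w : α → ℕ) (h1 : ∀ q ∈ F₁, w q = 1) (h2 : ∀ q ∈ F₂, w q = 2) (e : ℕ) :
    ((F₁ ∪ F₂).powerset.filter (fun S => ∑ q ∈ S, w q = e)).card
      = countN F₁.card F₂.card e := by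
  have inter1 : ∀ s t : Finset α, s ⊆ F₁ → t ⊆ F₂ → (s ∪ t) ∩ F₁ = s := by
    intro s t hs ht
    rw [Finset.union_inter_distrib_right, Finset.inter_eq_left.mpr hs,
      Finset.disjoint_iff_inter_eq_empty.mp (hdisj.symm.mono_left ht), Finset.union_empty]
  have inter2 : ∀ s t : Finset α, s ⊆ F₁ → t ⊆ F₂ → (s ∪ t) ∩ F₂ = t := by
    intro s t hs ht
    rw [Finset.union_inter_distrib_right, Finset.inter_eq_left.mpr ht,
      Finset.disjoint_iff_inter_eq_empty.mp (hdisj.mono_left hs), Finset.empty_union]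
  have key : ∀ S ∈ (F₁ ∪ F₂).powerset,
      ((∑ q ∈ S, w q = e) ↔ ((S ∩ F₁).card + 2 * (S ∩ F₂).card = e)) := by
    intro S hS
    rw [Finset.mem_powerset] at hS
    have hSsplit : (S ∩ F₁) ∪ (S ∩ F₂) = S := by
      rw [← Finset.inter_union_distrib_left, Finset.inter_eq_left.mpr hS]
    have hd : Disjoint (S ∩ F₁) (S ∩ F₂) :=
      hdisj.mono (Finset.inter_subset_right) (Finset.inter_subset_right)
    have : ∑ q ∈ S, w q = (S ∩ F₁).card + 2 * (S ∩ F₂).card := by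
      calc ∑ q ∈ S, w q = ∑ q ∈ (S ∩ F₁) ∪ (S ∩ F₂), w q := by rw [hSsplit]
        _ = ∑ q ∈ S ∩ F₁, w q + ∑ q ∈ S ∩ F₂, w q := Finset.sum_union hd
        _ = (S ∩ F₁).card * 1 + (S ∩ F₂).card * 2 := by
            rw [Finset.sum_congr rfl (fun q hq => h1 q (Finset.mem_of_mem_inter_right hq)),
              Finset.sum_congr rfl (fun q hq => h2 q (Finset.mem_of_mem_inter_right hq)),
              Finset.sum_const, Finset.sum_const, smul_eq_mul, smul_eq_mul]
        _ = (S ∩ F₁).card + 2 * (S ∩ F₂).card := by ring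
    rw [this]
  rw [Finset.filter_congr key]
  have hbij : ((F₁ ∪ F₂).powerset.filter
        (fun S => (S ∩ F₁).card + 2 * (S ∩ F₂).card = e)).card
      = ((F₁.powerset ×ˢ F₂.powerset).filter
        (fun st => st.1.card + 2 * st.2.card = e)).card := by
    apply Finset.card_bij' (i := fun S _ => (S ∩ F₁, S ∩ F₂))
      (j := fun st _ => st.1 ∪ st.2)
    · intro S hS
      simp only [Finset.mem_filter, Finset.mem_powerset, Finset.mem_product] at hS ⊢
      exact ⟨⟨Finset.inter_subset_right, Finset.inter_subset_right⟩, hS.2⟩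
    · intro st hst
      simp only [Finset.mem_filter, Finset.mem_powerset, Finset.mem_product] at hst ⊢
      refine ⟨Finset.union_subset_union hst.1.1 hst.1.2, ?_⟩
      rw [inter1 _ _ hst.1.1 hst.1.2, inter2 _ _ hst.1.1 hst.1.2]
      exact hst.2
    · intro S hS
      simp only [Finset.mem_filter, Finset.mem_powerset] at hS
      rw [← Finset.inter_union_distrib_left, Finset.inter_eq_left.mpr hS.1]
    · intro st hst
      simp only [Finset.mem_filter, Finset.mem_powerset, Finset.mem_product] at hst
      rw [inter1 _ _ hst.1.1 hst.1.2, inter2 _ _ hst.1.1 hst.1.2]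
  rw [hbij, Finset.card_filter, Finset.sum_product, countN_eq_double_sum]
  rw [Finset.sum_powerset]
  refine Finset.sum_congr rfl fun a ha => ?_
  rw [Finset.sum_powersetCard a F₁
    (fun n => ∑ t ∈ F₂.powerset, if n + 2 * t.card = e then 1 else 0)]
  rw [Finset.sum_powerset F₂ (fun t => if a + 2 * #t = e then 1 else 0)]
  rw [Finset.smul_sum]
  refine Finset.sum_congr rfl fun b hb => ?_
  rw [Finset.sum_powersetCard b F₂ (fun n => if a + 2 * n = e then 1 else 0)]
  simp only [smul_eq_mul, mul_ite, mul_one, mul_zero]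

/-- For a monic real polynomial p of degree d with d distinct complex roots,
exactly r of them real, and 0 ≤ e ≤ d, the number of monic real divisors of p
of degree e equals the coefficient of x^{d−e} y^e in (x+y)^r (x²+y²)^{(d−r)/2}. -/
theorem monic_divisor_count (d e r : ℕ) (he : e ≤ d)
    (p : Polynomial ℝ) (hp : p.Monic) (hdeg : p.natDegree = d)
    (hnodup : ((p.map (algebraMap ℝ ℂ)).roots).Nodup)
    (hr : r = p.roots.toFinset.card) :
    Set.ncard {g : Polynomial ℝ | g.Monic ∧ g.natDegree = e ∧ g ∣ p} =
      nuCoeff d e r := by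
  classical
  have hp0 : p ≠ 0 := hp.ne_zero
  have hsep : p.Separable := by
    have hsplits : (p.map (algebraMap ℝ ℂ)).Splits := IsAlgClosed.splits _
    exact (Polynomial.nodup_aroots_iff_of_splits hp0 hsplits).mp
      (by simpa [Polynomial.aroots_def] using hnodup)
  have hsf : Squarefree p := hsep.squarefree
  set F : Finset (Polynomial ℝ) := (normalizedFactors p).toFinset with hF
  have hFnodup : (normalizedFactors p).Nodup :=
    (squarefree_iff_nodup_normalizedFactors hp0).mp hsf
  have hFval : F.val = normalizedFactors p := by
    rw [hF, Multiset.toFinset_val, Multiset.dedup_eq_self.mpr hFnodup]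
  have hmemF : ∀ q ∈ F, q ∈ normalizedFactors p := by
    intro q hq; rwa [hF, Multiset.mem_toFinset] at hq
  have hmonicF : ∀ q ∈ F, q.Monic := by
    intro q hq
    have h2 : q ≠ 0 := (prime_of_normalized_factor q (hmemF q hq)).ne_zero
    rw [← normalize_normalized_factor q (hmemF q hq)]
    exact Polynomial.monic_normalize h2
  have hirrF : ∀ q ∈ F, Irreducible q := fun q hq =>
    irreducible_of_normalized_factor q (hmemF q hq)
  have hprodmonic : (F.prod id).Monic := Polynomial.monic_prod_of_monic _ _ hmonicF
  have hprodF : F.prod id = p := by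
    apply Polynomial.eq_of_monic_of_associated hprodmonic hp
    have : F.prod id = (normalizedFactors p).prod := by
      rw [Finset.prod, hFval, Multiset.map_id]
    rw [this]
    exact prod_normalizedFactors hp0
  -- products of subsets recover their factor sets
  have hnf_prod : ∀ S : Finset (Polynomial ℝ), S ⊆ F →
      normalizedFactors (S.prod id) = S.val := by
    intro S hSsub
    have h0 : (0 : Polynomial ℝ) ∉ S.val := by
      intro h
      exact (prime_of_normalized_factor 0 (hmemF 0 (hSsub h))).ne_zero rfl
    rw [Finset.prod, Multiset.map_id, normalizedFactors_multiset_prod _ h0]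
    rw [Multiset.map_congr rfl (fun q hq => ?_)]
    · exact Multiset.sum_map_singleton S.val
    · rw [normalizedFactors_irreducible (hirrF q (hSsub hq)),
        normalize_normalized_factor q (hmemF q (hSsub hq))]
  have hinj : Set.InjOn (fun S : Finset (Polynomial ℝ) => S.prod id)
      ↑(F.powerset.filter (fun S => ∑ q ∈ S, q.natDegree = e)) := by
    intro S hS T hT hprod
    simp only [Finset.coe_filter, Set.mem_setOf_eq, Finset.mem_powerset] at hS hT
    have hprod' : S.prod id = T.prod id := hprod
    have := hnf_prod S hS.1
    rw [hprod', hnf_prod T hT.1] at this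
    exact Finset.val_injective this.symm
  have hset : {g : Polynomial ℝ | g.Monic ∧ g.natDegree = e ∧ g ∣ p}
      = ↑((F.powerset.filter (fun S => ∑ q ∈ S, q.natDegree = e)).image
          (fun S => S.prod id)) := by
    ext g
    simp only [Set.mem_setOf_eq, Finset.coe_image, Set.mem_image, Finset.mem_coe,
      Finset.mem_filter, Finset.mem_powerset]
    constructor
    · rintro ⟨hg, hge, hgdvd⟩
      have hg0 : g ≠ 0 := hg.ne_zero
      have hle : normalizedFactors g ≤ normalizedFactors p :=
        (dvd_iff_normalizedFactors_le_normalizedFactors hg0 hp0).mp hgdvd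
      have hgnodup : (normalizedFactors g).Nodup := Multiset.nodup_of_le hle hFnodup
      set S : Finset (Polynomial ℝ) := (normalizedFactors g).toFinset with hS
      have hSval : S.val = normalizedFactors g := by
        rw [hS, Multiset.toFinset_val, Multiset.dedup_eq_self.mpr hgnodup]
      have hSsub : S ⊆ F := by
        rw [hS, hF]
        exact Multiset.toFinset_subset.mpr (Multiset.subset_of_le hle)
      have hSprod : S.prod id = g := by
        apply Polynomial.eq_of_monic_of_associated
          (Polynomial.monic_prod_of_monic _ _ (fun q hq => hmonicF q (hSsub hq))) hg
        show Associated (S.prod id) g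
        have : S.prod id = (normalizedFactors g).prod := by
          rw [Finset.prod, hSval, Multiset.map_id]
        rw [this]
        exact prod_normalizedFactors hg0
      have hdegprod : (S.prod id).natDegree = ∑ q ∈ S, q.natDegree :=
        Polynomial.natDegree_prod _ _ (fun q hq => (hmonicF q (hSsub hq)).ne_zero)
      refine ⟨S, ⟨hSsub, ?_⟩, hSprod⟩
      rw [← hdegprod, hSprod]
      exact hge
    · rintro ⟨S, ⟨hSsub, hSdeg⟩, rfl⟩
      refine ⟨Polynomial.monic_prod_of_monic _ _ (fun q hq => hmonicF q (hSsub hq)), ?_, ?_⟩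
      · have hdegprod : (S.prod id).natDegree = ∑ q ∈ S, q.natDegree :=
          Polynomial.natDegree_prod _ _ (fun q hq => (hmonicF q (hSsub hq)).ne_zero)
        rw [hdegprod]
        exact hSdeg
      · rw [← hprodF]
        exact Finset.prod_dvd_prod_of_subset S F id hSsub
  -- partition of factors by degree
  set F1 : Finset (Polynomial ℝ) := F.filter (fun q => q.natDegree = 1) with hF1
  set F2 : Finset (Polynomial ℝ) := F.filter (fun q => q.natDegree = 2) with hF2
  have hdeg12 : ∀ q ∈ F, q.natDegree = 1 ∨ q.natDegree = 2 := by
    intro q hq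
    have h1 := (hirrF q hq).natDegree_pos
    have h2 := (hirrF q hq).natDegree_le_two
    omega
  have hunion : F1 ∪ F2 = F := by
    ext q
    simp only [hF1, hF2, Finset.mem_union, Finset.mem_filter]
    constructor
    · rintro (⟨h, _⟩ | ⟨h, _⟩) <;> exact h
    · intro h
      rcases hdeg12 q h with h' | h'
      · exact Or.inl ⟨h, h'⟩
      · exact Or.inr ⟨h, h'⟩
  have hdisj : Disjoint F1 F2 := by
    rw [Finset.disjoint_left]
    intro q h1 h2
    rw [hF1, Finset.mem_filter] at h1
    rw [hF2, Finset.mem_filter] at h2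
    omega
  -- F1 corresponds to real roots
  have himg : F1 = p.roots.toFinset.image (fun x => X - C x) := by
    ext q
    simp only [Finset.mem_image, Multiset.mem_toFinset, hF1, Finset.mem_filter]
    constructor
    · rintro ⟨hqF, hqdeg⟩
      have hqm := hmonicF q hqF
      have hq1 : q = X + C (q.coeff 0) := hqm.eq_X_add_C hqdeg
      refine ⟨-(q.coeff 0), ?_, ?_⟩
      · rw [Polynomial.mem_roots hp0]
        have hdvd : q ∣ p := dvd_of_mem_normalizedFactors (hmemF q hqF)
        have hroot : q.IsRoot (-(q.coeff 0)) := by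
          rw [hq1]; simp [Polynomial.IsRoot]
        exact hroot.dvd hdvd
      · rw [map_neg, sub_neg_eq_add, ← hq1]
    · rintro ⟨x, hx, rfl⟩
      have hxroot : p.IsRoot x := (Polynomial.mem_roots hp0).mp hx
      constructor
      · rw [hF, Multiset.mem_toFinset]
        have hdvd : X - C x ∣ p := dvd_iff_isRoot.mpr hxroot
        obtain ⟨q', hq'mem, hq'assoc⟩ :=
          exists_mem_normalizedFactors_of_dvd hp0 (irreducible_X_sub_C x) hdvd
        have hq'monic : q'.Monic := by
          have h2 : q' ≠ 0 := (prime_of_normalized_factor q' hq'mem).ne_zero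
          rw [← normalize_normalized_factor q' hq'mem]
          exact Polynomial.monic_normalize h2
        have heq : X - C x = q' :=
          Polynomial.eq_of_monic_of_associated (monic_X_sub_C x) hq'monic hq'assoc
        rwa [heq]
      · exact natDegree_X_sub_C x
  have hXCinj : Function.Injective (fun x : ℝ => X - C x) := by
    intro a b h
    have := congrArg (fun q : Polynomial ℝ => q.coeff 0) h
    simpa using this
  have hcard1 : F1.card = r := by
    rw [himg, Finset.card_image_of_injective _ hXCinj, hr]
  -- degree count
  have hsumdeg : ∑ q ∈ F, q.natDegree = d := by
    have hdegprod : (F.prod id).natDegree = ∑ q ∈ F, q.natDegree :=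
      Polynomial.natDegree_prod _ _ (fun q hq => (hmonicF q hq).ne_zero)
    rw [← hdegprod, hprodF, hdeg]
  have hsum12 : F1.card + 2 * F2.card = d := by
    have hsplit : ∑ q ∈ F, q.natDegree = ∑ q ∈ F1, q.natDegree + ∑ q ∈ F2, q.natDegree := by
      rw [← hunion, Finset.sum_union hdisj]
    have e1 : ∑ q ∈ F1, q.natDegree = F1.card * 1 := by
      rw [Finset.sum_congr rfl (fun q hq => (Finset.mem_filter.mp hq).2),
        Finset.sum_const, smul_eq_mul]
    have e2 : ∑ q ∈ F2, q.natDegree = F2.card * 2 := by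
      rw [Finset.sum_congr rfl (fun q hq => (Finset.mem_filter.mp hq).2),
        Finset.sum_const, smul_eq_mul]
    omega
  -- final count
  rw [hset, Set.ncard_coe_finset, Finset.card_image_of_injOn hinj, ← hunion]
  rw [count_subsets F1 F2 hdisj (fun q => q.natDegree)
    (fun q hq => (Finset.mem_filter.mp hq).2) (fun q hq => (Finset.mem_filter.mp hq).2) e]
  rw [hcard1]
  have hd' : d = r + 2 * F2.card := by omega
  rw [hd']
  exact (nuCoeff_eq r F2.card e (hd' ▸ he)).symm
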